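/- Let (Ω, F, P) be a probability space, let τ ≤ t be natural numbers, and for each natural number u with τ ≤ u ≤ t let X₁(τ,u) and X₂(u,t) be random variables taking values in (0,∞) such that X₁(τ,u) and X₂(u,t) are independent. Then for every real s < 1, E[(min_{τ≤u≤t} X₁(τ,u)·X₂(u,t))^{s−1}] ≤ Σ_{u=τ}^{t} E[X₁(τ,u)^{s−1}]·E[X₂(u,t)^{s−1}], where both sides are allowed to take the value +∞. -/

import Mathlib

open MeasureTheory ProbabilityTheory

/-- Convolution bound of the (min,×) stochastic network calculus:
the Mellin transform (at `s < 1`) of the (min,×)-convolution of two independent positive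
SNR processes is bounded by the sum of products of their Mellin transforms. -/
theorem minTimes_convolution_mellin_bound
    {Ω : Type*} [MeasureSpace Ω] [IsProbabilityMeasure (ℙ : Measure Ω)]
    (X₁ X₂ : ℕ → ℕ → Ω → ℝ) (τ t : ℕ) (hτt : τ ≤ t)
    (hmeas₁ : ∀ u, τ ≤ u → u ≤ t → Measurable (X₁ τ u))
    (hmeas₂ : ∀ u, τ ≤ u → u ≤ t → Measurable (X₂ u t))
    (hpos₁ : ∀ u, τ ≤ u → u ≤ t → ∀ ω, 0 < X₁ τ u ω)
    (hpos₂ : ∀ u, τ ≤ u → u ≤ t → ∀ ω, 0 < X₂ u t ω)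
    (hindep : ∀ u, τ ≤ u → u ≤ t → IndepFun (X₁ τ u) (X₂ u t) ℙ)
    (s : ℝ) (hs : s < 1) :
    ∫⁻ ω, ENNReal.ofReal
        (((Finset.Icc τ t).inf' (Finset.nonempty_Icc.mpr hτt)
          (fun u => X₁ τ u ω * X₂ u t ω)) ^ (s - 1)) ∂ℙ ≤
      ∑ u ∈ Finset.Icc τ t,
        (∫⁻ ω, ENNReal.ofReal (X₁ τ u ω ^ (s - 1)) ∂ℙ) *
        (∫⁻ ω, ENNReal.ofReal (X₂ u t ω ^ (s - 1)) ∂ℙ) := by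
  have key : ∀ ω, ENNReal.ofReal
      (((Finset.Icc τ t).inf' (Finset.nonempty_Icc.mpr hτt)
        (fun u => X₁ τ u ω * X₂ u t ω)) ^ (s - 1)) ≤
      ∑ u ∈ Finset.Icc τ t,
        ENNReal.ofReal ((X₁ τ u ω) ^ (s - 1)) * ENNReal.ofReal ((X₂ u t ω) ^ (s - 1)) := by
    intro ω
    obtain ⟨u₀, hu₀, heq⟩ := Finset.exists_mem_eq_inf' (Finset.nonempty_Icc.mpr hτt)
      (fun u => X₁ τ u ω * X₂ u t ω)
    rw [heq]
    simp only [Finset.mem_Icc] at hu₀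
    calc ENNReal.ofReal ((X₁ τ u₀ ω * X₂ u₀ t ω) ^ (s - 1))
        = ENNReal.ofReal ((X₁ τ u₀ ω) ^ (s - 1)) * ENNReal.ofReal ((X₂ u₀ t ω) ^ (s - 1)) := by
          rw [Real.mul_rpow (hpos₁ u₀ hu₀.1 hu₀.2 ω).le (hpos₂ u₀ hu₀.1 hu₀.2 ω).le,
            ENNReal.ofReal_mul (Real.rpow_nonneg (hpos₁ u₀ hu₀.1 hu₀.2 ω).le _)]
      _ ≤ _ := Finset.single_le_sum (f := fun u => ENNReal.ofReal ((X₁ τ u ω) ^ (s - 1)) * ENNReal.ofReal ((X₂ u t ω) ^ (s - 1))) (fun i _ => zero_le) (Finset.mem_Icc.mpr hu₀)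
  calc ∫⁻ ω, ENNReal.ofReal
        (((Finset.Icc τ t).inf' (Finset.nonempty_Icc.mpr hτt)
          (fun u => X₁ τ u ω * X₂ u t ω)) ^ (s - 1)) ∂ℙ
      ≤ ∫⁻ ω, ∑ u ∈ Finset.Icc τ t,
          ENNReal.ofReal ((X₁ τ u ω) ^ (s - 1)) * ENNReal.ofReal ((X₂ u t ω) ^ (s - 1)) ∂ℙ :=
        lintegral_mono key
    _ = ∑ u ∈ Finset.Icc τ t, ∫⁻ ω,
          ENNReal.ofReal ((X₁ τ u ω) ^ (s - 1)) * ENNReal.ofReal ((X₂ u t ω) ^ (s - 1)) ∂ℙ := by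
        refine lintegral_finset_sum _ (fun u hu => ?_)
        simp only [Finset.mem_Icc] at hu
        exact (ENNReal.measurable_ofReal.comp
            ((hmeas₁ u hu.1 hu.2).pow_const _)).mul
          (ENNReal.measurable_ofReal.comp ((hmeas₂ u hu.1 hu.2).pow_const _))
    _ ≤ _ := by
        refine Finset.sum_le_sum (fun u hu => ?_)
        simp only [Finset.mem_Icc] at hu
        exact le_of_eq (lintegral_mul_eq_lintegral_mul_lintegral_of_indepFun''
          ((hmeas₁ u hu.1 hu.2).pow_const _).ennreal_ofReal.aemeasurable
          ((hmeas₂ u hu.1 hu.2).pow_const _).ennreal_ofReal.aemeasurable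
          ((hindep u hu.1 hu.2).comp
            (ENNReal.measurable_ofReal.comp (measurable_id.pow_const _))
            (ENNReal.measurable_ofReal.comp (measurable_id.pow_const _))))
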